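/- Let u, v, w, z be four distinct vertices of a simple graph G such that the sequence [uv][wz] is applicable to G (i.e. {u,v} ∈ E(G) and {w,z} ∈ E(G[uv])). Then at least one of the sequences [wz][uv], [vz][uw], [uz][vw] is applicable to G. -/

import Mathlib

set_option linter.unusedSectionVars false

variable {V : Type*} [Fintype V] [DecidableEq V]

/-- Local complementation at a vertex `w`: complement the edges within `N_G(w)`. -/
def SimpleGraph.localComp (G : SimpleGraph V) (w : V) : SimpleGraph V where
  Adj x y := x ≠ y ∧ Xor' (G.Adj x y) (G.Adj x w ∧ G.Adj y w)
  symm := by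
    constructor
    intro x y ⟨hne, hx⟩
    refine ⟨hne.symm, ?_⟩
    have h1 := G.adj_comm x y
    unfold Xor' Xor at hx ⊢
    tauto
  loopless := by constructor; intro x ⟨h, _⟩; exact h rfl

/-- `x ∼_G y` : `x = y` or `{x,y}` is an edge of `G`. -/
def SimpleGraph.nbr (G : SimpleGraph V) (x y : V) : Prop := x = y ∨ G.Adj x y

theorem SimpleGraph.nbr_comm (G : SimpleGraph V) (x y : V) : G.nbr x y ↔ G.nbr y x :=
  or_congr eq_comm (G.adj_comm x y)

private theorem xor_swap_right (a b c : Prop) : Xor' (Xor' a b) c ↔ Xor' (Xor' a c) b := by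
  unfold Xor' Xor; tauto

/-- The pivot `G[uv]` of `G` on an edge `{u,v}`, characterized by
`x ∼_{G[uv]} y ⟺ (x ∼_G y) XOR ((x ∼_G u) ∧ (y ∼_G v)) XOR ((x ∼_G v) ∧ (y ∼_G u))`. -/
def SimpleGraph.pivot (G : SimpleGraph V) (u v : V) : SimpleGraph V where
  Adj x y := x ≠ y ∧
    Xor' (Xor' (G.nbr x y) (G.nbr x u ∧ G.nbr y v)) (G.nbr x v ∧ G.nbr y u)
  symm := by
    constructor
    intro x y ⟨hne, hx⟩
    refine ⟨hne.symm, ?_⟩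
    show Xor' (Xor' (G.nbr y x) (G.nbr y u ∧ G.nbr x v)) (G.nbr y v ∧ G.nbr x u)
    rw [G.nbr_comm y x, and_comm (a := G.nbr y u) (b := G.nbr x v),
      and_comm (a := G.nbr y v) (b := G.nbr x u)]
    exact (xor_swap_right _ _ _).mp hx
  loopless := by constructor; intro x ⟨h, _⟩; exact h rfl

/-- Determinant over GF(2) of the adjacency matrix of the subgraph of `G` induced by `S`. -/
noncomputable def gdet (G : SimpleGraph V) (S : Finset V) : ZMod 2 := by
  classical
  exact Matrix.det (Matrix.of fun i j : S => if G.Adj i j then (1 : ZMod 2) else 0)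

/-- Apply a sequence of pivots (left to right). -/
def applyPivots (G : SimpleGraph V) : List (V × V) → SimpleGraph V
  | [] => G
  | p :: φ => applyPivots (G.pivot p.1 p.2) φ

/-- A sequence of pivots is applicable when each pair is an edge of the graph
obtained by applying all preceding pivots. -/
def PivotsApplicable (G : SimpleGraph V) : List (V × V) → Prop
  | [] => True
  | p :: φ => G.Adj p.1 p.2 ∧ PivotsApplicable (G.pivot p.1 p.2) φ

/-- The support of a sequence of pivots: vertices occurring an odd number of times. -/
def pivotSupport (φ : List (V × V)) : Finset V :=
  Finset.univ.filter fun x => Odd ((φ.flatMap fun p => [p.1, p.2]).count x)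

/-- A sequence of pivots is reduced if its pivot vertices are pairwise distinct. -/
def ReducedSeq (φ : List (V × V)) : Prop := (φ.flatMap fun p => [p.1, p.2]).Nodup

/-- The number of perfect matchings of the subgraph of `G` induced by `S`:
sets of edges of `G` inside `S` such that every vertex of `S` lies in exactly one of them. -/
noncomputable def pmCount (G : SimpleGraph V) (S : Finset V) : ℕ := by
  classical
  exact (Finset.univ.filter fun P : Finset (Sym2 V) =>
    (∀ e ∈ P, e ∈ G.edgeSet ∧ ∀ v ∈ e, v ∈ S) ∧
    ∀ v ∈ S, ∃! e, e ∈ P ∧ v ∈ e).card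

/-- if `[uv][wz]` is applicable to `G` for four distinct vertices, then
at least one of `[wz][uv]`, `[vz][uw]`, `[uz][vw]` is applicable to `G`. -/
theorem exists_applicable_rearrangement (G : SimpleGraph V) (u v w z : V)
    (hd : [u, v, w, z].Nodup) (h1 : G.Adj u v) (h2 : (G.pivot u v).Adj w z) :
    (G.Adj w z ∧ (G.pivot w z).Adj u v) ∨
    (G.Adj v z ∧ (G.pivot v z).Adj u w) ∨
    (G.Adj u z ∧ (G.pivot u z).Adj v w) := by
  have huv : u ≠ v := by rintro rfl; simp at hd
  have huw : u ≠ w := by rintro rfl; simp at hd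
  have huz : u ≠ z := by rintro rfl; simp at hd
  have hvw : v ≠ w := by rintro rfl; simp at hd
  have hvz : v ≠ z := by rintro rfl; simp at hd
  have hwz : w ≠ z := by rintro rfl; simp at hd
  simp only [SimpleGraph.pivot, SimpleGraph.nbr, Xor'] at h2 ⊢
  simp only [huv, huw, huz, hvw, hvz, hwz, Ne.symm huv, Ne.symm huw, Ne.symm huz,
    Ne.symm hvw, Ne.symm hvz, Ne.symm hwz, G.adj_comm v u, G.adj_comm w u, G.adj_comm z u,
    G.adj_comm w v, G.adj_comm z v, G.adj_comm z w,
    ne_eq, not_false_eq_true, false_or, true_and] at h2 ⊢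
  by_cases a1 : G.Adj u v <;> by_cases a2 : G.Adj u w <;> by_cases a3 : G.Adj u z <;>
    by_cases a4 : G.Adj v w <;> by_cases a5 : G.Adj v z <;> by_cases a6 : G.Adj w z <;>
    simp_all
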